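/- arXiv:1406.0034 — 2 statements merged into one kernel-verified Lean document; each statement's English description precedes it below -/
import Mathlib

section
/- Mutual information as relative entropy: let ω be a faithful density matrix on ℂ^{d_S}⊗ℂ^{d_R} with marginals ρ = tr_R(ω) and ν = tr_S(ω). Then S(ω | ρ ⊗ ν) = S(ρ) + S(ν) − S(ω). In particular S(ρ) + S(ν) ≥ S(ω) (subadditivity of entropy). -/
open Matrix Kronecker ComplexOrder

/-- Logarithm of a matrix, defined via the spectral theorem for Hermitian matrices
(junk value `0` on non-Hermitian matrices).  Since `Real.log 0 = 0`, for a positive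
semidefinite matrix this is the logarithm taken on the support, with the convention
`log 0 = 0` on the kernel. -/
noncomputable def mlog {n : Type*} [Fintype n] [DecidableEq n] (A : Matrix n n ℂ) :
    Matrix n n ℂ :=
  if hA : A.IsHermitian then
    (hA.eigenvectorUnitary : Matrix n n ℂ) *
      Matrix.diagonal (fun i => (Real.log (hA.eigenvalues i) : ℂ)) *
      (star hA.eigenvectorUnitary : Matrix n n ℂ)
  else 0

/-- von Neumann entropy `S(ρ) = -tr(ρ log ρ)`. -/
noncomputable def vnEnt {n : Type*} [Fintype n] [DecidableEq n] (ρ : Matrix n n ℂ) : ℝ :=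
  -(Matrix.trace (ρ * mlog ρ)).re

/-- Relative entropy `S(ζ₁|ζ₂) = tr(ζ₁ (log ζ₁ - log ζ₂))`. -/
noncomputable def relEnt {n : Type*} [Fintype n] [DecidableEq n] (ζ₁ ζ₂ : Matrix n n ℂ) : ℝ :=
  (Matrix.trace (ζ₁ * (mlog ζ₁ - mlog ζ₂))).re

/-- A density matrix: positive semidefinite with unit trace. -/
def IsDensityMatrix {n : Type*} [Fintype n] [DecidableEq n] (ρ : Matrix n n ℂ) : Prop :=
  ρ.PosSemidef ∧ ρ.trace = 1

/-- Partial trace over the reservoir (second) factor: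
`(tr_R M)_{ij} = Σ_k M_{(i,k),(j,k)}`. -/
noncomputable def ptraceR {dS dR : ℕ} (M : Matrix (Fin dS × Fin dR) (Fin dS × Fin dR) ℂ) :
    Matrix (Fin dS) (Fin dS) ℂ :=
  Matrix.of fun i j => ∑ k, M (i, k) (j, k)

/-- Partial trace over the system (first) factor:
`(tr_S M)_{kl} = Σ_i M_{(i,k),(i,l)}`. -/
noncomputable def ptraceS {dS dR : ℕ} (M : Matrix (Fin dS × Fin dR) (Fin dS × Fin dR) ℂ) :
    Matrix (Fin dR) (Fin dR) ℂ :=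
  Matrix.of fun k l => ∑ i, M (i, k) (i, l)

/-- The Gibbs state `e^{-βH}/tr(e^{-βH})` at inverse temperature `β`. -/
noncomputable def gibbs {dR : ℕ} (β : ℝ) (H : Matrix (Fin dR) (Fin dR) ℂ) :
    Matrix (Fin dR) (Fin dR) ℂ :=
  (Matrix.trace (NormedSpace.exp ((-β : ℂ) • H)))⁻¹ • NormedSpace.exp ((-β : ℂ) • H)

/-- The trace norm `‖X‖₁ = tr((X*X)^{1/2})`. -/
noncomputable def traceNorm {n : Type*} [Fintype n] [DecidableEq n] (X : Matrix n n ℂ) : ℝ :=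
  (Matrix.trace
    (((Matrix.posSemidef_conjTranspose_mul_self X).1.eigenvectorUnitary : Matrix n n ℂ) *
      Matrix.diagonal (((↑) : ℝ → ℂ) ∘ (√·) ∘ (Matrix.posSemidef_conjTranspose_mul_self X).1.eigenvalues) *
      (star (Matrix.posSemidef_conjTranspose_mul_self X).1.eigenvectorUnitary : Matrix n n ℂ))).re

namespace MIaux
open Polynomial
set_option linter.unusedSectionVars false
variable {n : Type*} [Fintype n] [DecidableEq n]

/-- conjugation by a unitary as an algebra homomorphism -/
noncomputable def conjAH (V : Matrix.unitaryGroup n ℂ) : Matrix n n ℂ →ₐ[ℂ] Matrix n n ℂ where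
  toFun B := (V : Matrix n n ℂ) * B * star (V : Matrix n n ℂ)
  map_one' := by
    show (V : Matrix n n ℂ) * 1 * star (V : Matrix n n ℂ) = 1
    rw [mul_one, Matrix.mem_unitaryGroup_iff.mp V.2]
  map_mul' B C := by
    have h : star (V : Matrix n n ℂ) * (V : Matrix n n ℂ) = 1 :=
      Matrix.mem_unitaryGroup_iff'.mp V.2
    simp only [Matrix.mul_assoc]
    rw [← Matrix.mul_assoc (star (V : Matrix n n ℂ)) (V : Matrix n n ℂ), h, one_mul]
  map_zero' := by simp
  map_add' B C := by noncomm_ring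
  commutes' r := by
    simp only [Algebra.algebraMap_eq_smul_one, Matrix.smul_mul, Matrix.mul_smul, mul_one]
    rw [Matrix.mem_unitaryGroup_iff.mp V.2]

lemma aeval_conj (V : Matrix.unitaryGroup n ℂ) (B : Matrix n n ℂ) (q : ℂ[X]) :
    aeval ((V : Matrix n n ℂ) * B * star (V : Matrix n n ℂ)) q
      = (V : Matrix n n ℂ) * aeval B q * star (V : Matrix n n ℂ) :=
  aeval_algHom_apply (conjAH V) B q

lemma aeval_diagonal (c : n → ℂ) (q : ℂ[X]) :
    aeval (Matrix.diagonal c) q = Matrix.diagonal (fun i => q.eval (c i)) := by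
  have h := aeval_algHom_apply (Matrix.diagonalAlgHom ℂ : (n → ℂ) →ₐ[ℂ] Matrix n n ℂ) c q
  rw [Matrix.diagonalAlgHom_apply] at h
  have h2 : (aeval c q : n → ℂ) = fun i => q.eval (c i) := by
    funext i
    have := aeval_algHom_apply (Pi.evalAlgHom ℂ (fun _ : n => ℂ) i) c q
    rw [Pi.evalAlgHom_apply] at this
    rw [show ((aeval c) q) i = (Pi.evalAlgHom ℂ (fun _ : n => ℂ) i) ((aeval c) q) from rfl, ← this, aeval_def, eval₂_eq_eval_map, Algebra.algebraMap_self, Polynomial.map_id]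
  rw [h, Matrix.diagonalAlgHom_apply, h2]

lemma hermitian_conj_diag (V : Matrix.unitaryGroup n ℂ) (d : n → ℝ) :
    ((V : Matrix n n ℂ) * Matrix.diagonal (fun i => (d i : ℂ)) *
      star (V : Matrix n n ℂ)).IsHermitian := by
  exact Matrix.isHermitian_mul_mul_conjTranspose _
    (Matrix.isHermitian_diagonal_of_self_adjoint _ (by funext i; simp [Pi.star_def]))

lemma mlog_conj (V : Matrix.unitaryGroup n ℂ) (d : n → ℝ) :
    mlog ((V : Matrix n n ℂ) * Matrix.diagonal (fun i => (d i : ℂ)) * star (V : Matrix n n ℂ))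
      = (V : Matrix n n ℂ) * Matrix.diagonal (fun i => (Real.log (d i) : ℂ)) *
        star (V : Matrix n n ℂ) := by
  set A := (V : Matrix n n ℂ) * Matrix.diagonal (fun i => (d i : ℂ)) * star (V : Matrix n n ℂ)
    with hAdef
  have hA : A.IsHermitian := hermitian_conj_diag V d
  classical
  set s : Finset ℝ := Finset.image d Finset.univ ∪ Finset.image hA.eigenvalues Finset.univ
    with hs
  set p : Polynomial ℝ := Lagrange.interpolate s id Real.log with hpdef
  have hp : ∀ x ∈ s, p.eval x = Real.log x := fun x hx =>
    Lagrange.eval_interpolate_at_node Real.log (Set.injOn_id _) hx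
  set q : ℂ[X] := p.map (algebraMap ℝ ℂ) with hqdef
  have hq : ∀ x ∈ s, q.eval (x : ℂ) = (Real.log x : ℂ) := by
    intro x hx
    rw [hqdef, Polynomial.eval_map, ← Complex.coe_algebraMap, Polynomial.eval₂_at_apply,
      hp x hx, Complex.coe_algebraMap]
  have h1 : aeval A q = (V : Matrix n n ℂ) * Matrix.diagonal (fun i => (Real.log (d i) : ℂ)) *
      star (V : Matrix n n ℂ) := by
    rw [hAdef, aeval_conj, aeval_diagonal]
    have he : (fun i => Polynomial.eval ((d i : ℂ)) q) = fun i => ((Real.log (d i) : ℂ)) :=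
      funext fun i =>
        hq (d i) (Finset.mem_union_left _ (Finset.mem_image_of_mem d (Finset.mem_univ i)))
    rw [he]
  have h2 : aeval A q = mlog A := by
    conv_lhs => rw [hA.spectral_theorem, Unitary.conjStarAlgAut_apply]
    rw [aeval_conj hA.eigenvectorUnitary, aeval_diagonal, mlog, dif_pos hA]
    have he : (fun i => Polynomial.eval ((RCLike.ofReal ∘ hA.eigenvalues) i) q)
        = fun i => ((Real.log (hA.eigenvalues i) : ℂ)) :=
      funext fun i =>
        hq (hA.eigenvalues i)
          (Finset.mem_union_right _ (Finset.mem_image_of_mem _ (Finset.mem_univ i)))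
    rw [he]
  rw [← h2, h1]

lemma conj_mul_conj (V : Matrix.unitaryGroup n ℂ) (B C : Matrix n n ℂ) :
    ((V : Matrix n n ℂ) * B * star (V : Matrix n n ℂ)) *
      ((V : Matrix n n ℂ) * C * star (V : Matrix n n ℂ))
      = (V : Matrix n n ℂ) * (B * C) * star (V : Matrix n n ℂ) := by
  have h : star (V : Matrix n n ℂ) * (V : Matrix n n ℂ) = 1 :=
    Matrix.mem_unitaryGroup_iff'.mp V.2
  simp only [Matrix.mul_assoc]
  rw [← Matrix.mul_assoc (star (V : Matrix n n ℂ)) (V : Matrix n n ℂ), h, one_mul]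

lemma trace_conj (V : Matrix.unitaryGroup n ℂ) (B : Matrix n n ℂ) :
    Matrix.trace ((V : Matrix n n ℂ) * B * star (V : Matrix n n ℂ)) = Matrix.trace B := by
  rw [Matrix.trace_mul_cycle, Matrix.mem_unitaryGroup_iff'.mp V.2, one_mul]

lemma trace_diag_mul_diag_mul (a b : n → ℂ) (W : Matrix n n ℂ) :
    Matrix.trace (Matrix.diagonal a * W * Matrix.diagonal b * Wᴴ)
      = ∑ i, ∑ j, a i * b j * (W i j * star (W i j)) := by
  have h1 : Matrix.diagonal a * W * Matrix.diagonal b = Matrix.of fun i j => a i * W i j * b j := by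
    ext i j
    simp [Matrix.mul_diagonal, Matrix.diagonal_mul, mul_comm, mul_assoc]
  rw [h1]
  simp only [Matrix.trace, Matrix.diag_apply, Matrix.mul_apply, Matrix.of_apply,
    Matrix.conjTranspose_apply]
  apply Finset.sum_congr rfl
  intro i _
  apply Finset.sum_congr rfl
  intro j _
  ring

lemma trace_conj_mul_conj (U V : Matrix.unitaryGroup n ℂ) (a b : n → ℂ) :
    Matrix.trace (((U : Matrix n n ℂ) * Matrix.diagonal a * star (U : Matrix n n ℂ)) *
        ((V : Matrix n n ℂ) * Matrix.diagonal b * star (V : Matrix n n ℂ)))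
      = ∑ i, ∑ j, a i * b j *
          ((star (U : Matrix n n ℂ) * (V : Matrix n n ℂ)) i j *
            star ((star (U : Matrix n n ℂ) * (V : Matrix n n ℂ)) i j)) := by
  set W : Matrix n n ℂ := star (U : Matrix n n ℂ) * (V : Matrix n n ℂ) with hW
  have key : ((U : Matrix n n ℂ) * Matrix.diagonal a * star (U : Matrix n n ℂ)) *
        ((V : Matrix n n ℂ) * Matrix.diagonal b * star (V : Matrix n n ℂ))
      = (U : Matrix n n ℂ) * (Matrix.diagonal a * W * Matrix.diagonal b * Wᴴ) *
          star (U : Matrix n n ℂ) := by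
    rw [← Matrix.star_eq_conjTranspose, hW, Matrix.star_mul, star_star]
    simp only [Matrix.mul_assoc]
    rw [Matrix.mem_unitaryGroup_iff.mp U.2, mul_one]
  rw [key, trace_conj, trace_diag_mul_diag_mul]

lemma log_ineq {p q : ℝ} (hp : 0 < p) (hq : 0 < q) :
    p - q ≤ p * Real.log p - p * Real.log q := by
  have h := Real.log_le_sub_one_of_pos (div_pos hq hp)
  rw [Real.log_div hq.ne' hp.ne'] at h
  have h2 := mul_le_mul_of_nonneg_left h hp.le
  have h3 : p * (q / p) = q := by field_simp
  nlinarith [h2, h3]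

lemma klein (U V : Matrix.unitaryGroup n ℂ) (pv qv : n → ℝ)
    (hp : ∀ i, 0 < pv i) (hq : ∀ j, 0 < qv j)
    (hps : ∑ i, pv i = 1) (hqs : ∑ j, qv j = 1) :
    (Matrix.trace
        (((U : Matrix n n ℂ) * Matrix.diagonal (fun i => (pv i : ℂ)) * star (U : Matrix n n ℂ)) *
          ((V : Matrix n n ℂ) * Matrix.diagonal (fun j => (Real.log (qv j) : ℂ)) *
            star (V : Matrix n n ℂ)))).re
      ≤ ∑ i, pv i * Real.log (pv i) := by
  set W : Matrix n n ℂ := star (U : Matrix n n ℂ) * (V : Matrix n n ℂ) with hW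
  have hWmem : W ∈ Matrix.unitaryGroup n ℂ := mul_mem (Unitary.star_mem U.2) V.2
  set w : n → n → ℝ := fun i j => Complex.normSq (W i j) with hw
  have hWw : ∀ i j, W i j * star (W i j) = ((w i j : ℝ) : ℂ) := by
    intro i j
    rw [hw, Complex.star_def, Complex.mul_conj]
  have hrow : ∀ i, ∑ j, w i j = 1 := by
    intro i
    have h1 : (W * star W) i i = 1 := by
      rw [Matrix.mem_unitaryGroup_iff.mp hWmem, Matrix.one_apply_eq]
    rw [Matrix.mul_apply] at h1
    have h2 : ∑ j, ((w i j : ℝ) : ℂ) = 1 := by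
      rw [← h1]
      exact Finset.sum_congr rfl fun j _ => by rw [← hWw, Matrix.star_apply]
    exact_mod_cast h2
  have hcol : ∀ j, ∑ i, w i j = 1 := by
    intro j
    have h1 : (star W * W) j j = 1 := by
      rw [Matrix.mem_unitaryGroup_iff'.mp hWmem, Matrix.one_apply_eq]
    rw [Matrix.mul_apply] at h1
    have h2 : ∑ i, ((w i j : ℝ) : ℂ) = 1 := by
      rw [← h1]
      refine Finset.sum_congr rfl fun i _ => ?_
      rw [Matrix.star_apply, ← hWw i j]
      ring
    exact_mod_cast h2
  rw [trace_conj_mul_conj, ← hW]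
  have hre : (∑ i, ∑ j, ((pv i : ℂ)) * ((Real.log (qv j) : ℂ)) * (W i j * star (W i j)))
      = ((∑ i, ∑ j, pv i * Real.log (qv j) * w i j : ℝ) : ℂ) := by
    push_cast
    refine Finset.sum_congr rfl fun i _ => Finset.sum_congr rfl fun j _ => ?_
    rw [hWw]
  rw [hre, Complex.ofReal_re]
  calc ∑ i, ∑ j, pv i * Real.log (qv j) * w i j
      ≤ ∑ i, ∑ j, (pv i * Real.log (pv i) - (pv i - qv j)) * w i j := by
        refine Finset.sum_le_sum fun i _ => Finset.sum_le_sum fun j _ => ?_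
        have h1 := log_ineq (hp i) (hq j)
        have h2 : (0 : ℝ) ≤ w i j := Complex.normSq_nonneg _
        nlinarith [h1, h2]
    _ = ∑ i, pv i * Real.log (pv i) := by
        have expand : ∀ i, ∑ j, (pv i * Real.log (pv i) - (pv i - qv j)) * w i j
            = pv i * Real.log (pv i) * (∑ j, w i j) - pv i * (∑ j, w i j)
              + ∑ j, qv j * w i j := by
          intro i
          rw [Finset.mul_sum, Finset.mul_sum, ← Finset.sum_sub_distrib, ← Finset.sum_add_distrib]
          exact Finset.sum_congr rfl fun j _ => by ring
        simp only [expand, hrow, mul_one]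
        rw [Finset.sum_add_distrib, Finset.sum_sub_distrib, hps]
        rw [Finset.sum_comm]
        have : ∑ j, ∑ i, qv j * w i j = ∑ j, qv j := by
          refine Finset.sum_congr rfl fun j _ => ?_
          rw [← Finset.mul_sum, hcol, mul_one]
        rw [this, hqs]
        ring

lemma trace_conj_mul_mlog_self (U : Matrix.unitaryGroup n ℂ) (pv : n → ℝ) :
    Matrix.trace (((U : Matrix n n ℂ) * Matrix.diagonal (fun i => (pv i : ℂ)) *
        star (U : Matrix n n ℂ)) *
      mlog ((U : Matrix n n ℂ) * Matrix.diagonal (fun i => (pv i : ℂ)) * star (U : Matrix n n ℂ)))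
      = ((∑ i, pv i * Real.log (pv i) : ℝ) : ℂ) := by
  rw [mlog_conj, conj_mul_conj, trace_conj, Matrix.diagonal_mul_diagonal,
    Matrix.trace_diagonal]
  push_cast
  rfl

lemma spectral' {A : Matrix n n ℂ} (hA : A.IsHermitian) :
    A = (hA.eigenvectorUnitary : Matrix n n ℂ) *
        Matrix.diagonal (fun i => ((hA.eigenvalues i : ℝ) : ℂ)) *
        star (hA.eigenvectorUnitary : Matrix n n ℂ) := by
  have h := hA.spectral_theorem
  rw [Unitary.conjStarAlgAut_apply] at h
  exact h

lemma sum_eigenvalues_eq_one {A : Matrix n n ℂ} (hA : A.IsHermitian) (htr : A.trace = 1) :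
    ∑ i, hA.eigenvalues i = 1 := by
  have h : A.trace = ((∑ i, hA.eigenvalues i : ℝ) : ℂ) := by
    conv_lhs => rw [spectral' hA]
    rw [trace_conj hA.eigenvectorUnitary, Matrix.trace_diagonal]
    push_cast
    rfl
  rw [htr] at h
  exact_mod_cast h.symm

section Kron
variable {m : Type*} [Fintype m] [DecidableEq m]

lemma kron_star (A : Matrix n n ℂ) (B : Matrix m m ℂ) :
    star (A ⊗ₖ B) = star A ⊗ₖ star B := by
  ext ⟨i, k⟩ ⟨j, l⟩
  simp only [Matrix.star_apply, Matrix.kroneckerMap_apply, star_mul']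

lemma kron_mem_unitary (U : Matrix.unitaryGroup n ℂ) (V : Matrix.unitaryGroup m ℂ) :
    (U : Matrix n n ℂ) ⊗ₖ (V : Matrix m m ℂ) ∈ Matrix.unitaryGroup (n × m) ℂ := by
  rw [Matrix.mem_unitaryGroup_iff', kron_star, ← Matrix.mul_kronecker_mul,
    Matrix.mem_unitaryGroup_iff'.mp U.2, Matrix.mem_unitaryGroup_iff'.mp V.2,
    Matrix.one_kronecker_one]

lemma kron_conj_left (U : Matrix.unitaryGroup n ℂ) (V : Matrix.unitaryGroup m ℂ)
    (B : Matrix n n ℂ) :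
    ((U : Matrix n n ℂ) ⊗ₖ (V : Matrix m m ℂ)) * (B ⊗ₖ (1 : Matrix m m ℂ)) *
        star ((U : Matrix n n ℂ) ⊗ₖ (V : Matrix m m ℂ))
      = ((U : Matrix n n ℂ) * B * star (U : Matrix n n ℂ)) ⊗ₖ (1 : Matrix m m ℂ) := by
  rw [kron_star, ← Matrix.mul_kronecker_mul, ← Matrix.mul_kronecker_mul, mul_one,
    Matrix.mem_unitaryGroup_iff.mp V.2]

lemma kron_conj_right (U : Matrix.unitaryGroup n ℂ) (V : Matrix.unitaryGroup m ℂ)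
    (B : Matrix m m ℂ) :
    ((U : Matrix n n ℂ) ⊗ₖ (V : Matrix m m ℂ)) * ((1 : Matrix n n ℂ) ⊗ₖ B) *
        star ((U : Matrix n n ℂ) ⊗ₖ (V : Matrix m m ℂ))
      = (1 : Matrix n n ℂ) ⊗ₖ ((V : Matrix m m ℂ) * B * star (V : Matrix m m ℂ)) := by
  rw [kron_star, ← Matrix.mul_kronecker_mul, ← Matrix.mul_kronecker_mul, mul_one,
    Matrix.mem_unitaryGroup_iff.mp U.2]

lemma kron_decomp (U : Matrix.unitaryGroup n ℂ) (V : Matrix.unitaryGroup m ℂ)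
    (r : n → ℝ) (s : m → ℝ) :
    ((U : Matrix n n ℂ) * Matrix.diagonal (fun i => (r i : ℂ)) * star (U : Matrix n n ℂ)) ⊗ₖ
        ((V : Matrix m m ℂ) * Matrix.diagonal (fun k => (s k : ℂ)) * star (V : Matrix m m ℂ))
      = (((U : Matrix n n ℂ) ⊗ₖ (V : Matrix m m ℂ)) : Matrix (n × m) (n × m) ℂ) *
          Matrix.diagonal (fun ik : n × m => ((r ik.1 * s ik.2 : ℝ) : ℂ)) *
          star ((U : Matrix n n ℂ) ⊗ₖ (V : Matrix m m ℂ)) := by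
  have hd : Matrix.diagonal (fun ik : n × m => ((r ik.1 * s ik.2 : ℝ) : ℂ))
      = Matrix.diagonal (fun i => (r i : ℂ)) ⊗ₖ Matrix.diagonal (fun k => (s k : ℂ)) := by
    rw [Matrix.diagonal_kronecker_diagonal]
    congr
    funext ik
    push_cast
    rfl
  rw [hd, kron_star, ← Matrix.mul_kronecker_mul, ← Matrix.mul_kronecker_mul]

lemma mlog_kron (U : Matrix.unitaryGroup n ℂ) (V : Matrix.unitaryGroup m ℂ)
    (r : n → ℝ) (s : m → ℝ) (hr : ∀ i, 0 < r i) (hs : ∀ k, 0 < s k) :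
    mlog (((U : Matrix n n ℂ) * Matrix.diagonal (fun i => (r i : ℂ)) *
          star (U : Matrix n n ℂ)) ⊗ₖ
        ((V : Matrix m m ℂ) * Matrix.diagonal (fun k => (s k : ℂ)) * star (V : Matrix m m ℂ)))
      = mlog ((U : Matrix n n ℂ) * Matrix.diagonal (fun i => (r i : ℂ)) *
          star (U : Matrix n n ℂ)) ⊗ₖ (1 : Matrix m m ℂ)
        + (1 : Matrix n n ℂ) ⊗ₖ mlog ((V : Matrix m m ℂ) *
            Matrix.diagonal (fun k => (s k : ℂ)) * star (V : Matrix m m ℂ)) := by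
  set UV : Matrix.unitaryGroup (n × m) ℂ := ⟨_, kron_mem_unitary U V⟩ with hUV
  have hUVc : (UV : Matrix (n × m) (n × m) ℂ)
      = (U : Matrix n n ℂ) ⊗ₖ (V : Matrix m m ℂ) := rfl
  rw [kron_decomp, ← hUVc, mlog_conj UV (fun ik : n × m => r ik.1 * s ik.2)]
  have hsplit : Matrix.diagonal (fun ik : n × m => ((Real.log (r ik.1 * s ik.2) : ℝ) : ℂ))
      = Matrix.diagonal (fun i => ((Real.log (r i) : ℝ) : ℂ)) ⊗ₖ (1 : Matrix m m ℂ)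
        + (1 : Matrix n n ℂ) ⊗ₖ Matrix.diagonal (fun k => ((Real.log (s k) : ℝ) : ℂ)) := by
    rw [← Matrix.diagonal_one, ← Matrix.diagonal_one, Matrix.diagonal_kronecker_diagonal,
      Matrix.diagonal_kronecker_diagonal, Matrix.diagonal_add]
    refine congrArg Matrix.diagonal (funext fun ik => ?_)
    rw [Real.log_mul (hr ik.1).ne' (hs ik.2).ne']
    push_cast
    ring
  rw [hsplit, mul_add, add_mul, hUVc, kron_conj_left, kron_conj_right,
    mlog_conj U r, mlog_conj V s]

end Kron

end MIaux

namespace MIaux2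
open MIaux
variable {dS dR : ℕ} (M ω : Matrix (Fin dS × Fin dR) (Fin dS × Fin dR) ℂ)

lemma sum_rotate {α β γ : Type*} [Fintype α] [Fintype β] [Fintype γ]
    (f : α → β → γ → ℂ) :
    ∑ a, ∑ b, ∑ c, f a b c = ∑ b, ∑ c, ∑ a, f a b c := by
  rw [Finset.sum_comm]
  exact Finset.sum_congr rfl fun b _ => Finset.sum_comm

lemma trace_mul_eq {n : Type*} [Fintype n] (P Q : Matrix n n ℂ) :
    Matrix.trace (P * Q) = ∑ a, ∑ b, P a b * Q b a := by
  simp [Matrix.trace, Matrix.mul_apply]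

lemma ptraceR_trace : (ptraceR M).trace = M.trace := by
  simp [ptraceR, Matrix.trace, Matrix.diag, Fintype.sum_prod_type]

lemma ptraceS_trace : (ptraceS M).trace = M.trace := by
  simp only [ptraceS, Matrix.trace, Matrix.diag_apply, Matrix.of_apply, Fintype.sum_prod_type]
  exact Finset.sum_comm

lemma ptraceR_hermitian (h : M.IsHermitian) : (ptraceR M).IsHermitian := by
  show (ptraceR M)ᴴ = ptraceR M
  ext i j
  simp only [Matrix.conjTranspose_apply, ptraceR, Matrix.of_apply, star_sum]
  refine Finset.sum_congr rfl fun k _ => ?_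
  rw [← Matrix.conjTranspose_apply, h]

lemma ptraceS_hermitian (h : M.IsHermitian) : (ptraceS M).IsHermitian := by
  show (ptraceS M)ᴴ = ptraceS M
  ext k l
  simp only [Matrix.conjTranspose_apply, ptraceS, Matrix.of_apply, star_sum]
  refine Finset.sum_congr rfl fun i _ => ?_
  rw [← Matrix.conjTranspose_apply, h]

lemma trace_mul_kron_one (A : Matrix (Fin dS) (Fin dS) ℂ) :
    Matrix.trace (M * (A ⊗ₖ (1 : Matrix (Fin dR) (Fin dR) ℂ)))
      = Matrix.trace (ptraceR M * A) := by
  rw [trace_mul_eq, trace_mul_eq]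
  simp only [Fintype.sum_prod_type, Matrix.kroneckerMap_apply, Matrix.one_apply, mul_ite,
    mul_one, mul_zero, Finset.sum_ite_eq', Finset.mem_univ, if_pos, ptraceR, Matrix.of_apply,
    Finset.sum_mul]
  refine Finset.sum_congr rfl fun i _ => ?_
  exact Finset.sum_comm

lemma trace_mul_one_kron (B : Matrix (Fin dR) (Fin dR) ℂ) :
    Matrix.trace (M * ((1 : Matrix (Fin dS) (Fin dS) ℂ) ⊗ₖ B))
      = Matrix.trace (ptraceS M * B) := by
  rw [trace_mul_eq, trace_mul_eq]
  simp only [Fintype.sum_prod_type, Matrix.kroneckerMap_apply, Matrix.one_apply, ite_mul,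
    one_mul, zero_mul, mul_ite, mul_zero, Finset.sum_ite_eq', Finset.mem_univ, if_pos,
    Finset.sum_ite_irrel, Finset.sum_const_zero,
    ptraceS, Matrix.of_apply, Finset.sum_mul]
  exact sum_rotate _

lemma ptraceR_posDef (hω : ω.PosDef) [Nonempty (Fin dR)] : (ptraceR ω).PosDef := by
  refine Matrix.PosDef.of_dotProduct_mulVec_pos (ptraceR_hermitian ω hω.1) fun x hx => ?_
  classical
  set y : Fin dR → (Fin dS × Fin dR → ℂ) :=
    fun k jl => if jl.2 = k then x jl.1 else 0 with hy
  have hsum : dotProduct (star x) ((ptraceR ω) *ᵥ x)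
      = ∑ k, dotProduct (star (y k)) (ω *ᵥ (y k)) := by
    simp only [dotProduct, Matrix.mulVec, dotProduct, Pi.star_apply, ptraceR,
      Matrix.of_apply, hy, Fintype.sum_prod_type, apply_ite (star : ℂ → ℂ), star_zero, ite_mul, zero_mul,
      mul_ite, mul_zero, Finset.sum_ite_irrel, Finset.sum_const_zero,
      Finset.sum_ite_eq', Finset.mem_univ, if_pos, Finset.sum_mul, Finset.mul_sum]
    exact (sum_rotate _).symm
  rw [hsum]
  obtain ⟨i0, hi0⟩ : ∃ i, x i ≠ 0 := Function.ne_iff.mp hx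
  obtain ⟨k0⟩ := (inferInstance : Nonempty (Fin dR))
  refine Finset.sum_pos' (fun k _ => hω.posSemidef.dotProduct_mulVec_nonneg (y k)) ⟨k0, Finset.mem_univ k0, ?_⟩
  refine hω.dotProduct_mulVec_pos (x := y k0) ?_
  intro hzero
  apply hi0
  have := congrFun hzero (i0, k0)
  simpa [hy] using this

lemma ptraceS_posDef (hω : ω.PosDef) [Nonempty (Fin dS)] : (ptraceS ω).PosDef := by
  refine Matrix.PosDef.of_dotProduct_mulVec_pos (ptraceS_hermitian ω hω.1) fun x hx => ?_
  classical
  set y : Fin dS → (Fin dS × Fin dR → ℂ) :=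
    fun i jl => if jl.1 = i then x jl.2 else 0 with hy
  have hsum : dotProduct (star x) ((ptraceS ω) *ᵥ x)
      = ∑ i, dotProduct (star (y i)) (ω *ᵥ (y i)) := by
    simp only [dotProduct, Matrix.mulVec, dotProduct, Pi.star_apply, ptraceS,
      Matrix.of_apply, hy, Fintype.sum_prod_type, apply_ite (star : ℂ → ℂ), star_zero, ite_mul, zero_mul,
      mul_ite, mul_zero, Finset.sum_ite_irrel, Finset.sum_const_zero,
      Finset.sum_ite_eq', Finset.mem_univ, if_pos, Finset.sum_mul, Finset.mul_sum]
    exact (sum_rotate _).symm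
  rw [hsum]
  obtain ⟨k0, hk0⟩ : ∃ k, x k ≠ 0 := Function.ne_iff.mp hx
  obtain ⟨i0⟩ := (inferInstance : Nonempty (Fin dS))
  refine Finset.sum_pos' (fun i _ => hω.posSemidef.dotProduct_mulVec_nonneg (y i)) ⟨i0, Finset.mem_univ i0, ?_⟩
  refine hω.dotProduct_mulVec_pos (x := y i0) ?_
  intro hzero
  apply hk0
  have := congrFun hzero (i0, k0)
  simpa [hy] using this

end MIaux2

open MIaux MIaux2

/-- **Mutual information as relative entropy.**
For a faithful density matrix `ω` on `ℂ^{d_S} ⊗ ℂ^{d_R}` with marginals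
`ρ = tr_R ω` and `ν = tr_S ω`, one has `S(ω | ρ ⊗ ν) = S(ρ) + S(ν) - S(ω)`;
in particular `S(ρ) + S(ν) ≥ S(ω)` (subadditivity of entropy). -/
theorem mutual_information_eq_and_subadditivity {dS dR : ℕ}
    (ω : Matrix (Fin dS × Fin dR) (Fin dS × Fin dR) ℂ)
    (hω : ω.PosDef) (hωtr : ω.trace = 1) :
    relEnt ω (ptraceR ω ⊗ₖ ptraceS ω)
        = vnEnt (ptraceR ω) + vnEnt (ptraceS ω) - vnEnt ω ∧
    vnEnt ω ≤ vnEnt (ptraceR ω) + vnEnt (ptraceS ω) := by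
  classical
  have hne : Nonempty (Fin dS × Fin dR) := by
    by_contra h
    rw [not_nonempty_iff] at h
    rw [Matrix.trace, Finset.univ_eq_empty, Finset.sum_empty] at hωtr
    exact zero_ne_one hωtr
  have hneS : Nonempty (Fin dS) := ⟨(Classical.arbitrary _ : Fin dS × Fin dR).1⟩
  have hneR : Nonempty (Fin dR) := ⟨(Classical.arbitrary _ : Fin dS × Fin dR).2⟩
  set ρ := ptraceR ω with hρdef
  set ν := ptraceS ω with hνdef
  have hρpd : ρ.PosDef := ptraceR_posDef ω hω
  have hνpd : ν.PosDef := ptraceS_posDef ω hω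
  have hρtr : ρ.trace = 1 := by rw [hρdef, ptraceR_trace, hωtr]
  have hνtr : ν.trace = 1 := by rw [hνdef, ptraceS_trace, hωtr]
  have hωh : ω.IsHermitian := hω.1
  have hρh : ρ.IsHermitian := hρpd.1
  have hνh : ν.IsHermitian := hνpd.1
  set p := hωh.eigenvalues with hpdef
  set r := hρh.eigenvalues with hrdef
  set s := hνh.eigenvalues with hsdef
  have hp : ∀ i, 0 < p i := hω.eigenvalues_pos
  have hr : ∀ i, 0 < r i := hρpd.eigenvalues_pos
  have hs : ∀ k, 0 < s k := hνpd.eigenvalues_pos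
  have hps : ∑ i, p i = 1 := sum_eigenvalues_eq_one hωh hωtr
  have hrs : ∑ i, r i = 1 := sum_eigenvalues_eq_one hρh hρtr
  have hss : ∑ k, s k = 1 := sum_eigenvalues_eq_one hνh hνtr
  have hω_eq := spectral' hωh
  have hρ_eq := spectral' hρh
  have hν_eq := spectral' hνh
  set Eω := ∑ i, p i * Real.log (p i) with hEω
  set Eρ := ∑ i, r i * Real.log (r i) with hEρ
  set Eν := ∑ k, s k * Real.log (s k) with hEν
  -- trace(ω mlog ω), trace(ρ mlog ρ), trace(ν mlog ν)
  have hA1 : Matrix.trace (ω * mlog ω) = ((Eω : ℝ) : ℂ) := by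
    conv_lhs => rw [hω_eq]
    rw [trace_conj_mul_mlog_self]
  have hT2 : Matrix.trace (ρ * mlog ρ) = ((Eρ : ℝ) : ℂ) := by
    conv_lhs => rw [hρ_eq]
    rw [trace_conj_mul_mlog_self]
  have hT3 : Matrix.trace (ν * mlog ν) = ((Eν : ℝ) : ℂ) := by
    conv_lhs => rw [hν_eq]
    rw [trace_conj_mul_mlog_self]
  -- mlog of the kronecker product
  have hmlogkron : mlog (ρ ⊗ₖ ν) = mlog ρ ⊗ₖ (1 : Matrix (Fin dR) (Fin dR) ℂ)
      + (1 : Matrix (Fin dS) (Fin dS) ℂ) ⊗ₖ mlog ν := by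
    conv_lhs => rw [hρ_eq, hν_eq]
    rw [mlog_kron _ _ _ _ hr hs, ← hρ_eq, ← hν_eq]
  have hA2 : Matrix.trace (ω * mlog (ρ ⊗ₖ ν)) = ((Eρ + Eν : ℝ) : ℂ) := by
    rw [hmlogkron, mul_add, Matrix.trace_add, trace_mul_kron_one, trace_mul_one_kron,
      ← hρdef, ← hνdef, hT2, hT3]
    push_cast
    ring
  -- Klein's inequality
  have hkl : (Matrix.trace (ω * mlog (ρ ⊗ₖ ν))).re ≤ Eω := by
    set UV : Matrix.unitaryGroup (Fin dS × Fin dR) ℂ :=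
      ⟨_, kron_mem_unitary hρh.eigenvectorUnitary hνh.eigenvectorUnitary⟩ with hUV
    set qv : Fin dS × Fin dR → ℝ := fun ik => r ik.1 * s ik.2 with hqv
    have hq : ∀ ik, 0 < qv ik := fun ik => mul_pos (hr ik.1) (hs ik.2)
    have hqs : ∑ ik, qv ik = 1 := by
      rw [hqv, Fintype.sum_prod_type]
      simp_rw [← Finset.mul_sum, hss, mul_one]
      exact hrs
    have hkron_eq : ρ ⊗ₖ ν = (UV : Matrix (Fin dS × Fin dR) (Fin dS × Fin dR) ℂ) *
        Matrix.diagonal (fun ik => ((qv ik : ℝ) : ℂ)) *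
        star (UV : Matrix (Fin dS × Fin dR) (Fin dS × Fin dR) ℂ) := by
      conv_lhs => rw [hρ_eq, hν_eq]
      exact kron_decomp _ _ _ _
    have hmlog_eq : mlog (ρ ⊗ₖ ν) = (UV : Matrix (Fin dS × Fin dR) (Fin dS × Fin dR) ℂ) *
        Matrix.diagonal (fun ik => ((Real.log (qv ik) : ℝ) : ℂ)) *
        star (UV : Matrix (Fin dS × Fin dR) (Fin dS × Fin dR) ℂ) := by
      rw [hkron_eq, mlog_conj]
    have hklein := klein hωh.eigenvectorUnitary UV p qv hp hq hps hqs
    rw [← hω_eq, ← hmlog_eq] at hklein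
    exact hklein
  have hrel : relEnt ω (ρ ⊗ₖ ν) = Eω - (Eρ + Eν) := by
    rw [relEnt, mul_sub, Matrix.trace_sub, Complex.sub_re, hA1, hA2,
      Complex.ofReal_re, Complex.ofReal_re]
  have hvω : vnEnt ω = -Eω := by rw [vnEnt, hA1, Complex.ofReal_re]
  have hvρ : vnEnt ρ = -Eρ := by rw [vnEnt, hT2, Complex.ofReal_re]
  have hvν : vnEnt ν = -Eν := by rw [vnEnt, hT3, Complex.ofReal_re]
  constructor
  · rw [hrel, hvω, hvρ, hvν]
    ring
  · rw [hvω, hvρ, hvν]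
    have h2 : (Matrix.trace (ω * mlog (ρ ⊗ₖ ν))).re = Eρ + Eν := by
      rw [hA2, Complex.ofReal_re]
    rw [h2] at hkl
    linarith
end

section
/- Vanishing total work in the finite-reservoir adiabatic identity: let β > 0, let H be a Hermitian n×n complex matrix, and let γ ↦ K(γ) be a continuously differentiable path of Hermitian n×n matrices defined on a neighborhood of [0,1] such that tr(e^{−β(H+K(0))}) = tr(e^{−β(H+K(1))}). Then ∫₀¹ μ(γ)(K'(γ)) dγ = 0, where μ(γ)(X) = tr(e^{−β(H+K(γ))}·X)/tr(e^{−β(H+K(γ))}) is the instantaneous Gibbs state. -/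
open Matrix Kronecker ComplexOrder

namespace VTW

variable {n : ℕ}

/-- Formal derivative of `t ↦ M t ^ k` along a path, defined recursively. -/
noncomputable def D (M N : ℝ → Matrix (Fin n) (Fin n) ℂ) : ℕ → ℝ → Matrix (Fin n) (Fin n) ℂ
  | 0 => fun _ => 0
  | (k + 1) => fun t => D M N k t * M t + M t ^ k * N t

lemma hasDerivAt_pow_entry {M N : ℝ → Matrix (Fin n) (Fin n) ℂ} {t : ℝ}
    (h : ∀ i j, HasDerivAt (fun s => M s i j) (N t i j) t) (k : ℕ) (i j : Fin n) :
    HasDerivAt (fun s => (M s ^ k) i j) (D M N k t i j) t := by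
  induction k generalizing i j with
  | zero =>
    simp only [pow_zero, D, Matrix.zero_apply]
    exact hasDerivAt_const t _
  | succ k ih =>
    have key : HasDerivAt (fun s => ∑ m, (M s ^ k) i m * M s m j)
        (∑ m, (D M N k t i m * M t m j + (M t ^ k) i m * N t m j)) t :=
      HasDerivAt.fun_sum fun m _ => (ih i m).mul (h m j)
    have e1 : (fun s => (M s ^ (k + 1)) i j) = fun s => ∑ m, (M s ^ k) i m * M s m j := by
      funext s; rw [pow_succ, Matrix.mul_apply]
    have e2 : D M N (k + 1) t i j
        = ∑ m, (D M N k t i m * M t m j + (M t ^ k) i m * N t m j) := by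
      simp [D, Matrix.add_apply, Matrix.mul_apply, Finset.sum_add_distrib]
    rw [e1, e2]
    exact key

lemma trace_D_mul_pow (M N : ℝ → Matrix (Fin n) (Fin n) ℂ) (t : ℝ) :
    ∀ k m : ℕ, (D M N (k + 1) t * M t ^ m).trace
      = ((k : ℂ) + 1) * (M t ^ (k + m) * N t).trace := by
  intro k
  induction k with
  | zero =>
    intro m
    simp [D, Matrix.trace_mul_comm (N t) (M t ^ m)]
  | succ k ih =>
    intro m
    have h1 : D M N (k + 2) t * M t ^ m
        = D M N (k + 1) t * M t ^ (m + 1) + M t ^ (k + 1) * N t * M t ^ m := by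
      show (D M N (k + 1) t * M t + M t ^ (k + 1) * N t) * M t ^ m = _
      rw [add_mul, Matrix.mul_assoc, ← pow_succ']
    have h2 : (M t ^ (k + 1) * N t * M t ^ m).trace = (M t ^ (k + 1 + m) * N t).trace := by
      rw [Matrix.trace_mul_comm, ← Matrix.mul_assoc, ← pow_add, add_comm m (k + 1)]
    have e : k + (m + 1) = k + 1 + m := by ring
    rw [h1, Matrix.trace_add, ih (m + 1), h2, e]
    push_cast
    ring

lemma trace_D_succ (M N : ℝ → Matrix (Fin n) (Fin n) ℂ) (t : ℝ) (k : ℕ) :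
    (D M N (k + 1) t).trace = ((k : ℂ) + 1) * (M t ^ k * N t).trace := by
  have := trace_D_mul_pow M N t k 0
  simpa using this

section NormLemmas

attribute [local instance] Matrix.linftyOpSemiNormedRing Matrix.linftyOpNormedRing
  Matrix.linftyOpNormedAlgebra

lemma norm_entry_le (A : Matrix (Fin n) (Fin n) ℂ) (i j : Fin n) : ‖A i j‖ ≤ ‖A‖ := by
  have h1 : ‖A i j‖₊ ≤ ∑ j', ‖A i j'‖₊ :=
    Finset.single_le_sum (f := fun j' => ‖A i j'‖₊) (fun _ _ => zero_le) (Finset.mem_univ j)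
  have h2 : (∑ j', ‖A i j'‖₊) ≤ Finset.univ.sup fun i => ∑ j', ‖A i j'‖₊ :=
    Finset.le_sup (f := fun i => ∑ j', ‖A i j'‖₊) (Finset.mem_univ i)
  have := h1.trans h2
  rw [Matrix.linfty_opNorm_def]
  exact_mod_cast this

lemma norm_trace_le (A : Matrix (Fin n) (Fin n) ℂ) : ‖A.trace‖ ≤ n * ‖A‖ := by
  calc ‖A.trace‖ ≤ ∑ i, ‖A i i‖ := by
        rw [Matrix.trace]; exact norm_sum_le _ _
    _ ≤ ∑ _i : Fin n, ‖A‖ := Finset.sum_le_sum fun i _ => norm_entry_le A i i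
    _ = n * ‖A‖ := by simp [mul_comm]

end NormLemmas

end VTW

section DerivLemma

open NormedSpace Nat

attribute [local instance] Matrix.linftyOpSemiNormedRing Matrix.linftyOpNormedRing
  Matrix.linftyOpNormedAlgebra

lemma hasDerivAt_trace_exp {n : ℕ} {M N : ℝ → Matrix (Fin n) (Fin n) ℂ} {J : Set ℝ}
    (hJ : IsOpen J) (hM : ∀ t ∈ J, ∀ i j, HasDerivAt (fun s => M s i j) (N t i j) t)
    (hN : ContinuousOn N J) {t : ℝ} (ht : t ∈ J) :
    HasDerivAt (fun s => (NormedSpace.exp (M s)).trace)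
      ((NormedSpace.exp (M t) * N t).trace) t := by
  classical
  have hMc : ContinuousOn M J := by
    intro u hu
    refine ContinuousAt.continuousWithinAt ?_
    exact continuousAt_pi.2 fun i => continuousAt_pi.2 fun j => (hM u hu i j).continuousAt
  obtain ⟨ε, εpos, hballJ⟩ : ∃ ε > 0, Metric.closedBall t ε ⊆ J := by
    obtain ⟨δ, δpos, hδ⟩ := Metric.isOpen_iff.mp hJ t ht
    exact ⟨δ / 2, by positivity, (Metric.closedBall_subset_ball (by linarith)).trans hδ⟩
  have hUJ : Metric.ball t ε ⊆ J := Metric.ball_subset_closedBall.trans hballJ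
  obtain ⟨C, hC⟩ := (isCompact_closedBall t ε).exists_bound_of_continuousOn (hMc.mono hballJ)
  obtain ⟨C', hC'⟩ := (isCompact_closedBall t ε).exists_bound_of_continuousOn (hN.mono hballJ)
  have htU : t ∈ Metric.ball t ε := Metric.mem_ball_self εpos
  have hC0 : 0 ≤ C := le_trans (norm_nonneg _) (hC t (Metric.mem_closedBall_self εpos.le))
  have hC'0 : 0 ≤ C' := le_trans (norm_nonneg _) (hC' t (Metric.mem_closedBall_self εpos.le))
  set T : Matrix (Fin n) (Fin n) ℂ →L[ℂ] ℂ :=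
    LinearMap.toContinuousLinearMap (Matrix.traceLinearMap (Fin n) ℂ ℂ) with hT
  have hTapp : ∀ A : Matrix (Fin n) (Fin n) ℂ, T A = A.trace := fun _ => rfl
  set g : ℕ → ℝ → ℂ := fun k s => ((k ! : ℂ))⁻¹ • (M s ^ k).trace with hg_def
  set g' : ℕ → ℝ → ℂ := fun k s => ((k ! : ℂ))⁻¹ • (VTW.D M N k s).trace with hg'_def
  set u : ℕ → ℝ := fun k => (k ! : ℝ)⁻¹ * (k * ((n : ℝ) * (C ^ (k - 1) * C'))) with hu_def
  have hg : ∀ k s, s ∈ Metric.ball t ε → HasDerivAt (g k) (g' k s) s := by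
    intro k s hs
    have base : HasDerivAt (fun s' => ∑ i, (M s' ^ k) i i) (∑ i, VTW.D M N k s i i) s :=
      HasDerivAt.fun_sum fun i _ => VTW.hasDerivAt_pow_entry (hM s (hUJ hs)) k i i
    have h2 := base.const_smul ((k ! : ℂ))⁻¹
    show HasDerivAt (fun s' => ((k ! : ℂ))⁻¹ • (M s' ^ k).trace)
      (((k ! : ℂ))⁻¹ • (VTW.D M N k s).trace) s
    simpa [Matrix.trace, Matrix.diag, Pi.smul_def] using h2
  have hbound : ∀ s ∈ Metric.closedBall t ε, ∀ m : ℕ, ‖M s ^ m * N s‖ ≤ C ^ m * C' := by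
    intro s hs m
    induction m with
    | zero => simpa using hC' s hs
    | succ m ih =>
      have h1 : M s ^ (m + 1) * N s = M s * (M s ^ m * N s) := by
        rw [pow_succ' (M s) m, Matrix.mul_assoc]
      rw [h1]
      calc ‖M s * (M s ^ m * N s)‖ ≤ ‖M s‖ * ‖M s ^ m * N s‖ := norm_mul_le _ _
        _ ≤ C * (C ^ m * C') := mul_le_mul (hC s hs) ih (norm_nonneg _) hC0
        _ = C ^ (m + 1) * C' := by ring
  have hg'le : ∀ k s, s ∈ Metric.ball t ε → ‖g' k s‖ ≤ u k := by
    intro k s hs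
    have hs' : s ∈ Metric.closedBall t ε := Metric.ball_subset_closedBall hs
    cases k with
    | zero => simp [hg'_def, hu_def, VTW.D]
    | succ k =>
      have htr : ‖(VTW.D M N (k + 1) s).trace‖ ≤ (k + 1) * ((n : ℝ) * (C ^ k * C')) := by
        rw [VTW.trace_D_succ]
        rw [norm_mul]
        have h1 : ‖((k : ℂ) + 1)‖ = (k : ℝ) + 1 := by
          norm_cast
        rw [h1]
        have h2 : ‖(M s ^ k * N s).trace‖ ≤ (n : ℝ) * (C ^ k * C') := by
          calc ‖(M s ^ k * N s).trace‖ ≤ (n : ℝ) * ‖M s ^ k * N s‖ := VTW.norm_trace_le _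
            _ ≤ (n : ℝ) * (C ^ k * C') := by
                apply mul_le_mul_of_nonneg_left (hbound s hs' k) (by positivity)
        have hk1 : (0:ℝ) ≤ (k : ℝ) + 1 := by positivity
        exact mul_le_mul_of_nonneg_left h2 hk1
      show ‖(((k + 1)! : ℂ))⁻¹ • (VTW.D M N (k + 1) s).trace‖ ≤ u (k + 1)
      rw [norm_smul]
      have h3 : ‖(((k + 1)! : ℂ))⁻¹‖ = (((k + 1)! : ℝ))⁻¹ := by
        rw [norm_inv]; norm_cast
      rw [h3, hu_def]
      have h4 : ((k + 1 : ℕ) : ℝ) = (k : ℝ) + 1 := by push_cast; ring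
      simp only [Nat.add_sub_cancel, h4]
      exact mul_le_mul_of_nonneg_left htr (by positivity)
  have hu_sum : Summable u := by
    rw [← summable_nat_add_iff 1]
    have heq : (fun k => u (k + 1)) = fun k => ((n : ℝ) * C') * (C ^ k / k !) := by
      funext k
      rw [hu_def]
      simp only [Nat.add_sub_cancel]
      have h1 : ((k + 1)! : ℝ) = ((k : ℝ) + 1) * (k ! : ℝ) := by
        rw [Nat.factorial_succ]; push_cast; ring
      have h2 : (k ! : ℝ) ≠ 0 := Nat.cast_ne_zero.2 (Nat.factorial_ne_zero k)
      have h3 : (k : ℝ) + 1 ≠ 0 := by positivity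
      field_simp [h1]
      rw [h1]; push_cast; ring
    rw [heq]
    exact (Real.summable_pow_div_factorial C).mul_left _
  have hexp_sum : ∀ s : ℝ, Summable fun k => ((k ! : ℂ))⁻¹ • M s ^ k := fun s =>
    NormedSpace.expSeries_summable' (𝕂 := ℂ) (M s)
  have hg0 : Summable fun k => g k t := by
    have h2 := (hexp_sum t).map T.toLinearMap.toAddMonoidHom T.continuous
    have heq : (fun k => T.toLinearMap.toAddMonoidHom (((k ! : ℂ))⁻¹ • M t ^ k)) = fun k => g k t := by
      funext k
      show T (((k ! : ℂ))⁻¹ • M t ^ k) = g k t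
      rw [_root_.map_smul, hTapp]
    rw [← heq]
    exact h2
  have hfun : ∀ s, (NormedSpace.exp (M s)).trace = ∑' k, g k s := by
    intro s
    have h1 : NormedSpace.exp (M s) = ∑' k, ((k ! : ℂ))⁻¹ • M s ^ k := by
      rw [NormedSpace.exp_eq_tsum ℂ]
    rw [h1, ← hTapp]
    rw [T.map_tsum (hexp_sum s)]
    refine tsum_congr fun k => ?_
    rw [_root_.map_smul, hTapp]
  have key := hasDerivAt_tsum_of_isPreconnected hu_sum Metric.isOpen_ball
    (convex_ball t ε).isPreconnected hg hg'le htU hg0 htU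
  have hval : ∑' k, g' k t = (NormedSpace.exp (M t) * N t).trace := by
    have hs : Summable fun k => g' k t :=
      Summable.of_norm_bounded hu_sum fun k => hg'le k t htU
    rw [Summable.tsum_eq_zero_add hs]
    have h0 : g' 0 t = 0 := by simp [hg'_def, VTW.D]
    have hsucc : ∀ k : ℕ, g' (k + 1) t = T ((((k ! : ℂ))⁻¹ • M t ^ k) * N t) := by
      intro k
      show (((k + 1)! : ℂ))⁻¹ • (VTW.D M N (k + 1) t).trace = _
      rw [VTW.trace_D_succ, smul_mul_assoc, _root_.map_smul, hTapp, smul_eq_mul, smul_eq_mul,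
        ← mul_assoc]
      congr 1
      have h1 : ((k + 1)! : ℂ) = ((k : ℂ) + 1) * (k ! : ℂ) := by
        rw [Nat.factorial_succ]; push_cast; ring
      have h2 : (k ! : ℂ) ≠ 0 := Nat.cast_ne_zero.2 (Nat.factorial_ne_zero k)
      have h3 : (k : ℂ) + 1 ≠ 0 := by
        exact_mod_cast Nat.cast_add_one_ne_zero (R := ℂ) k
      field_simp [h1]
      rw [h1]
    have hsum2 : Summable fun k => (((k ! : ℂ))⁻¹ • M t ^ k) * N t :=
      (hexp_sum t).mul_right (N t)
    rw [h0, zero_add]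
    calc ∑' k, g' (k + 1) t = ∑' k, T ((((k ! : ℂ))⁻¹ • M t ^ k) * N t) :=
        tsum_congr fun k => hsucc k
      _ = T (∑' k, (((k ! : ℂ))⁻¹ • M t ^ k) * N t) := (T.map_tsum hsum2).symm
      _ = T ((∑' k, ((k ! : ℂ))⁻¹ • M t ^ k) * N t) := by
          rw [Summable.tsum_mul_right (N t) (hexp_sum t)]
      _ = (NormedSpace.exp (M t) * N t).trace := by
          rw [hTapp, NormedSpace.exp_eq_tsum ℂ]
  rw [← hval]
  exact key.congr_of_eventuallyEq (Filter.Eventually.of_forall hfun)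

end DerivLemma

lemma trace_exp_re_pos {n : ℕ} (hn : 0 < n) (A : Matrix (Fin n) (Fin n) ℂ)
    (hA : A.IsHermitian) : 0 < ((NormedSpace.exp A).trace).re := by
  classical
  have hhalf : ((2⁻¹ : ℂ) • A).IsHermitian := by
    show ((2⁻¹ : ℂ) • A)ᴴ = (2⁻¹ : ℂ) • A
    rw [Matrix.conjTranspose_smul, hA.eq]
    norm_num
  set B := NormedSpace.exp ((2⁻¹ : ℂ) • A) with hB_def
  have hB : B.IsHermitian := Matrix.IsHermitian.exp hhalf
  have hBB : NormedSpace.exp A = Bᴴ * B := by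
    have h2 : (2⁻¹ : ℂ) • A + (2⁻¹ : ℂ) • A = A := by
      rw [← add_smul]; norm_num
    rw [← h2, Matrix.exp_add_of_commute _ _ (Commute.refl _), hB.eq]
  have hre : ((NormedSpace.exp A).trace).re = ∑ j, ∑ i, Complex.normSq (B i j) := by
    rw [hBB, Matrix.trace]
    simp only [Matrix.diag, Matrix.mul_apply, Matrix.conjTranspose_apply]
    rw [Complex.re_sum]
    refine Finset.sum_congr rfl fun j _ => ?_
    rw [Complex.re_sum]
    refine Finset.sum_congr rfl fun i _ => ?_
    rw [Complex.star_def, ← Complex.normSq_eq_conj_mul_self, Complex.ofReal_re]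
  have hBne : B ≠ 0 := by
    haveI : Nonempty (Fin n) := ⟨⟨0, hn⟩⟩
    intro h
    exact (Matrix.isUnit_exp ((2⁻¹ : ℂ) • A)).ne_zero h
  obtain ⟨i0, j0, hij⟩ : ∃ i j, B i j ≠ 0 := by
    by_contra hcon
    push_neg at hcon
    exact hBne (Matrix.ext fun i j => hcon i j)
  rw [hre]
  refine Finset.sum_pos' (fun j _ => Finset.sum_nonneg fun i _ => Complex.normSq_nonneg _)
    ⟨j0, Finset.mem_univ _, ?_⟩
  exact Finset.sum_pos' (fun i _ => Complex.normSq_nonneg _)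
    ⟨i0, Finset.mem_univ _, Complex.normSq_pos.2 hij⟩

/-- **Vanishing total work in the finite-reservoir adiabatic identity.**
If `γ ↦ K(γ)` is a continuously differentiable path of Hermitian matrices on a
neighborhood of `[0,1]` with `tr(e^{-β(H+K(0))}) = tr(e^{-β(H+K(1))})`, then
`∫₀¹ μ(γ)(K'(γ)) dγ = 0`, where `μ(γ)` is the instantaneous Gibbs state
`X ↦ tr(e^{-β(H+K(γ))} X)/tr(e^{-β(H+K(γ))})`. -/
theorem vanishing_total_work {n : ℕ}
    (β : ℝ) (hβ : 0 < β)
    (H : Matrix (Fin n) (Fin n) ℂ) (hH : H.IsHermitian)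
    {J : Set ℝ} (hJ : IsOpen J) (hJ01 : Set.Icc (0 : ℝ) 1 ⊆ J)
    (K K' : ℝ → Matrix (Fin n) (Fin n) ℂ)
    (hK : ∀ γ ∈ J, (K γ).IsHermitian)
    (hKderiv : ∀ γ ∈ J, ∀ i j, HasDerivAt (fun s => K s i j) (K' γ i j) γ)
    (hKcont : ContinuousOn K' J)
    (hbc : Matrix.trace (NormedSpace.exp ((-β : ℂ) • (H + K 0)))
        = Matrix.trace (NormedSpace.exp ((-β : ℂ) • (H + K 1)))) :
    ∫ γ in (0 : ℝ)..1,
        (Matrix.trace (NormedSpace.exp ((-β : ℂ) • (H + K γ)) * K' γ)).re /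
          (Matrix.trace (NormedSpace.exp ((-β : ℂ) • (H + K γ)))).re = 0 := by
  classical
  rcases Nat.eq_zero_or_pos n with hn | hn
  · subst hn
    simp [Matrix.trace]
  -- notation
  have hMd : ∀ γ ∈ J, ∀ i j,
      HasDerivAt (fun s => ((-β : ℂ) • (H + K s)) i j) (((-β : ℂ) • K' γ) i j) γ := by
    intro γ hγ i j
    have h := ((hKderiv γ hγ i j).const_add (H i j)).const_mul (-β : ℂ)
    simpa [Matrix.smul_apply, Matrix.add_apply, smul_eq_mul, mul_comm] using h
  have hNc : ContinuousOn (fun γ => (-β : ℂ) • K' γ) J := hKcont.const_smul (-β : ℂ)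
  have hZd : ∀ γ ∈ J, HasDerivAt (fun s => (NormedSpace.exp ((-β : ℂ) • (H + K s))).trace)
      ((NormedSpace.exp ((-β : ℂ) • (H + K γ)) * ((-β : ℂ) • K' γ)).trace) γ := by
    intro γ hγ
    exact hasDerivAt_trace_exp (M := fun s => (-β : ℂ) • (H + K s))
      (N := fun γ => (-β : ℂ) • K' γ) hJ hMd hNc hγ
  have hherm : ∀ γ ∈ J, ((-β : ℂ) • (H + K γ)).IsHermitian := by
    intro γ hγ
    show ((-β : ℂ) • (H + K γ))ᴴ = (-β : ℂ) • (H + K γ)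
    rw [Matrix.conjTranspose_smul, (hH.add (hK γ hγ)).eq]
    congr 1
    simp [Complex.star_def]
  have hFpos : ∀ γ ∈ J, 0 < ((NormedSpace.exp ((-β : ℂ) • (H + K γ))).trace).re :=
    fun γ hγ => trace_exp_re_pos hn _ (hherm γ hγ)
  -- the derivative of -β⁻¹ log (Z γ).re is the integrand
  have hderiv : ∀ γ ∈ Set.uIcc (0 : ℝ) 1,
      HasDerivAt (fun s => -β⁻¹ * Real.log ((NormedSpace.exp ((-β : ℂ) • (H + K s))).trace.re))
      ((fun γ => (Matrix.trace (NormedSpace.exp ((-β : ℂ) • (H + K γ)) * K' γ)).re /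
          (Matrix.trace (NormedSpace.exp ((-β : ℂ) • (H + K γ)))).re) γ) γ := by
    intro γ hγ
    have hγJ : γ ∈ J := hJ01 (by rwa [Set.uIcc_of_le zero_le_one] at hγ)
    have hZre : HasDerivAt (fun s => ((NormedSpace.exp ((-β : ℂ) • (H + K s))).trace).re)
        (((NormedSpace.exp ((-β : ℂ) • (H + K γ)) * ((-β : ℂ) • K' γ)).trace).re) γ := by
      have := Complex.reCLM.hasFDerivAt.comp_hasDerivAt γ (hZd γ hγJ)
      simpa [Function.comp_def] using this
    have hre_eq : ((NormedSpace.exp ((-β : ℂ) • (H + K γ)) * ((-β : ℂ) • K' γ)).trace).re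
        = -β * ((NormedSpace.exp ((-β : ℂ) • (H + K γ)) * K' γ).trace).re := by
      rw [Matrix.mul_smul, Matrix.trace_smul]
      simp [smul_eq_mul, Complex.mul_re]
    rw [hre_eq] at hZre
    have hlog := (hZre.log (ne_of_gt (hFpos γ hγJ))).const_mul (-β⁻¹)
    have harith : -β⁻¹ * (-β * ((NormedSpace.exp ((-β : ℂ) • (H + K γ)) * K' γ).trace).re /
        ((NormedSpace.exp ((-β : ℂ) • (H + K γ))).trace).re)
        = ((NormedSpace.exp ((-β : ℂ) • (H + K γ)) * K' γ).trace).re /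
          ((NormedSpace.exp ((-β : ℂ) • (H + K γ))).trace).re := by
      field_simp
    rw [harith] at hlog
    exact hlog
  -- integrability of the integrand
  have hKc : ContinuousOn K J := by
    intro u hu
    refine ContinuousAt.continuousWithinAt ?_
    exact continuousAt_pi.2 fun i => continuousAt_pi.2 fun j => (hKderiv u hu i j).continuousAt
  have hMc : ContinuousOn (fun γ => (-β : ℂ) • (H + K γ)) J :=
    ((continuousOn_const (c := H)).add hKc).const_smul (-β : ℂ)
  have hexpc : ContinuousOn (fun γ => NormedSpace.exp ((-β : ℂ) • (H + K γ))) J := by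
    letI : SeminormedRing (Matrix (Fin n) (Fin n) ℂ) := Matrix.linftyOpSemiNormedRing
    letI : NormedRing (Matrix (Fin n) (Fin n) ℂ) := Matrix.linftyOpNormedRing
    letI : NormedAlgebra ℂ (Matrix (Fin n) (Fin n) ℂ) := Matrix.linftyOpNormedAlgebra
    letI : NormedAlgebra ℚ (Matrix (Fin n) (Fin n) ℂ) := Matrix.linftyOpNormedAlgebra
    exact NormedSpace.exp_continuous.comp_continuousOn hMc
  have htrc : Continuous fun A : Matrix (Fin n) (Fin n) ℂ => A.trace :=
    continuous_id.matrix_trace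
  have hIcc : Set.uIcc (0 : ℝ) 1 = Set.Icc 0 1 := Set.uIcc_of_le zero_le_one
  have hnum : ContinuousOn
      (fun γ => (Matrix.trace (NormedSpace.exp ((-β : ℂ) • (H + K γ)) * K' γ)).re) J := by
    exact Complex.continuous_re.comp_continuousOn (htrc.comp_continuousOn (hexpc.mul hKcont))
  have hden : ContinuousOn
      (fun γ => (Matrix.trace (NormedSpace.exp ((-β : ℂ) • (H + K γ)))).re) J :=
    Complex.continuous_re.comp_continuousOn (htrc.comp_continuousOn hexpc)
  have hint : IntervalIntegrable
      (fun γ => (Matrix.trace (NormedSpace.exp ((-β : ℂ) • (H + K γ)) * K' γ)).re /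
        (Matrix.trace (NormedSpace.exp ((-β : ℂ) • (H + K γ)))).re)
      MeasureTheory.volume 0 1 := by
    apply ContinuousOn.intervalIntegrable
    rw [hIcc]
    exact (hnum.mono hJ01).div (hden.mono hJ01)
      (fun γ hγ => ne_of_gt (hFpos γ (hJ01 hγ)))
  have hFTC := intervalIntegral.integral_eq_sub_of_hasDerivAt hderiv hint
  rw [hFTC]
  have hre01 : ((NormedSpace.exp ((-β : ℂ) • (H + K 1))).trace).re
      = ((NormedSpace.exp ((-β : ℂ) • (H + K 0))).trace).re := by
    rw [hbc]
  simp only [hre01]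
  ring
end
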